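/- Let G^s be an SCG with interventions X^f = {X^i_{t−γ_i}} and effect Y_t. If some candidate FTCG G^f contains a collider-free backdoor path π from an intervention X^i_{t−γ_i} to Y_t all of whose vertices lie in NC ∪ {X^i_{t−γ_i}}, then no set Z ⊆ (V × ℤ) ∖ (X^f ∪ {Y_t}) satisfies the common adjustment criterion relative to X^f and {Y_t} in G^s; i.e., the effect is not identifiable by common adjustment. -/

import Mathlib

open Classical Relation

variable {α : Type*}

/-- Full-time vertices: a time series together with an integer time point. -/
abbrev FullVert (V : Type) := V × ℤ

/-- A full-time causal graph: a DAG on `V × ℤ` whose edges respect time. -/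
structure FTCG (V : Type) where
  E : FullVert V → FullVert V → Prop
  time_respecting : ∀ a b, E a b → a.2 ≤ b.2
  acyclic : ∀ v, ¬ Relation.TransGen E v v

/-- Reduction of a graph on `V × ℤ` to a graph on `V`. -/
def reduction {V : Type} (E : FullVert V → FullVert V → Prop) : V → V → Prop :=
  fun A B => ∃ s s', E (A, s) (B, s')

/-- A summary causal graph is a reduction of some FTCG. -/
def IsSCG {V : Type} (Gs : V → V → Prop) : Prop :=
  ∃ G : FTCG V, reduction G.E = Gs

/-- A candidate FTCG for an SCG. -/
def Candidate {V : Type} (Gs : V → V → Prop) (G : FTCG V) : Prop :=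
  reduction G.E = Gs

/-- Consistency through time: every edge is present identically at all time shifts. -/
def ConsistentThroughTime {V : Type} (E : FullVert V → FullVert V → Prop) : Prop :=
  ∀ (A B : V) (s s' d : ℤ), E (A, s) (B, s') → E (A, s + d) (B, s' + d)

/-- A (possibly undirected-traversal) path, as a nonempty duplicate-free list of vertices
consecutively adjacent in one direction or the other. -/
def IsPathList (E : α → α → Prop) (vs : List α) : Prop :=
  vs ≠ [] ∧ vs.Nodup ∧ vs.Chain' (fun x y => E x y ∨ E y x)

/-- A directed path, as a list of vertices. -/
def IsDirPathList (E : α → α → Prop) (vs : List α) : Prop :=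
  vs ≠ [] ∧ vs.Nodup ∧ vs.Chain' E

/-- Vertex at position `i` of the list is a collider on the path. -/
def IsCollider (E : α → α → Prop) (vs : List α) (i : ℕ) : Prop :=
  ∃ a b c, 1 ≤ i ∧ vs[i-1]? = some a ∧ vs[i]? = some b ∧
    vs[i+1]? = some c ∧ E a b ∧ E c b

/-- Descendant relation (reflexive). -/
def Desc (E : α → α → Prop) (a b : α) : Prop := Relation.ReflTransGen E a b

/-- `Z` blocks a path: some non-collider on it is in `Z`, or some collider on it has no
descendant in `Z`. -/
def BlocksList (E : α → α → Prop) (Z : Set α) (vs : List α) : Prop :=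
  (∃ i a, vs[i]? = some a ∧ ¬ IsCollider E vs i ∧ a ∈ Z) ∨
  (∃ i a, vs[i]? = some a ∧ IsCollider E vs i ∧ ∀ d, Desc E a d → d ∉ Z)

/-- A proper path from `X` to `Y`: only its first vertex lies in `X`. -/
def ProperPathFromTo (E : α → α → Prop) (X Y : Set α) (vs : List α) : Prop :=
  IsPathList E vs ∧ (∃ a ∈ X, vs.head? = some a) ∧ (∃ b ∈ Y, vs.getLast? = some b) ∧
  ∀ i a, vs[i]? = some a → a ∈ X → i = 0

/-- Forbidden set: descendants of vertices `W ∉ X` lying on proper causal paths from `X` to `Y`. -/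
def Forb (E : α → α → Prop) (X Y : Set α) : Set α :=
  { d | ∃ w vs, ProperPathFromTo E X Y vs ∧ vs.Chain' E ∧ w ∈ vs ∧ w ∉ X ∧ Desc E w d }

/-- The adjustment criterion in a DAG. -/
def AdjustmentCriterion (E : α → α → Prop) (X Y Z : Set α) : Prop :=
  Z ∩ Forb E X Y = ∅ ∧
  ∀ vs, ProperPathFromTo E X Y vs → ¬ vs.Chain' E → BlocksList E Z vs

/-- The common adjustment criterion relative to an SCG. -/
def CommonAdjustment {V : Type} (Gs : V → V → Prop) (X Y Z : Set (FullVert V)) : Prop :=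
  ∀ G : FTCG V, Candidate Gs G → AdjustmentCriterion G.E X Y Z

/-- The common forbidden set. -/
def CF {V : Type} (Gs : V → V → Prop) (Xf : Set (FullVert V)) (Yt : FullVert V) :
    Set (FullVert V) :=
  { d | ∃ G : FTCG V, Candidate Gs G ∧ d ∈ Forb G.E Xf {Yt} }

/-- The non-conditionable set. -/
def NCset {V : Type} (Gs : V → V → Prop) (Xf : Set (FullVert V)) (Yt : FullVert V) :
    Set (FullVert V) :=
  CF Gs Xf Yt \ Xf

/-- Extended time: `ℤ` with `+∞` and `-∞`. -/
abbrev ETime := WithBot (WithTop ℤ)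

def toETime (n : ℤ) : ETime := ((n : WithTop ℤ) : ETime)

/-- First time at which a time series enters `NC` (`+∞` if never). -/
noncomputable def tNC {V : Type} (Gs : V → V → Prop) (Xf : Set (FullVert V))
    (Yt : FullVert V) (Z : V) : ETime :=
  sInf { s | ∃ n : ℤ, s = toETime n ∧ (Z, n) ∈ NCset Gs Xf Yt }

/-- Directed path (at least one edge) all of whose vertices stay in `S`. -/
def DirPathWithin (E : α → α → Prop) (S : Set α) (a b : α) : Prop :=
  Relation.TransGen (fun x y => E x y ∧ x ∈ S ∧ y ∈ S) a b

/-- `F` is `Vtv`-NC-accessible. -/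
def NCAccessible {V : Type} (Gs : V → V → Prop) (Xf : Set (FullVert V))
    (Yt Vtv F : FullVert V) : Prop :=
  F ≠ Vtv ∧ ∃ G : FTCG V, Candidate Gs G ∧
    DirPathWithin G.E (NCset Gs Xf Yt ∪ {Vtv}) F Vtv

/-- `F` is `Vtv`-NC-accessible via a consistent-through-time candidate. -/
def NCAccessibleC {V : Type} (Gs : V → V → Prop) (Xf : Set (FullVert V))
    (Yt Vtv F : FullVert V) : Prop :=
  F ≠ Vtv ∧ ∃ G : FTCG V, Candidate Gs G ∧ ConsistentThroughTime G.E ∧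
    DirPathWithin G.E (NCset Gs Xf Yt ∪ {Vtv}) F Vtv

/-- Latest time at which the time series `F` is `Vtv`-NC-accessible (`-∞` if never). -/
noncomputable def tAcc {V : Type} (Gs : V → V → Prop) (Xf : Set (FullVert V))
    (Yt Vtv : FullVert V) (F : V) : ETime :=
  sSup { s | ∃ n : ℤ, s = toETime n ∧ NCAccessible Gs Xf Yt Vtv (F, n) }

/-- A directed path from `a` to `b`, as a list. -/
def IsDirPathFromTo (E : α → α → Prop) (a b : α) (vs : List α) : Prop :=
  IsDirPathList E vs ∧ vs.head? = some a ∧ vs.getLast? = some b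

/-- A collider-free backdoor path from `x` to `y`. -/
def IsColliderFreeBackdoor (E : α → α → Prop) (x y : α) (vs : List α) : Prop :=
  IsPathList E vs ∧ vs.head? = some x ∧ vs.getLast? = some y ∧
  (∃ a, vs[1]? = some a ∧ E a x) ∧ ∀ i, ¬ IsCollider E vs i

/-- The consecutive edges of a list path. -/
def listEdge (vs : List α) (a b : α) : Prop :=
  ∃ i, vs[i]? = some a ∧ vs[i+1]? = some b

/-- `b` has `a` as ancestor via a directed path avoiding `A`. -/
def AncAvoid (E : α → α → Prop) (A : Set α) (a b : α) : Prop :=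
  Relation.ReflTransGen (fun x y => E x y ∧ x ∉ A ∧ y ∉ A) a b

/-- Identifiability by common adjustment. -/
def IdentifiableByCommonAdjustment {V : Type} (Gs : V → V → Prop)
    (Xf : Set (FullVert V)) (Yt : FullVert V) : Prop :=
  ∃ Z : Set (FullVert V), Z ⊆ Set.univ \ (Xf ∪ {Yt}) ∧ CommonAdjustment Gs Xf {Yt} Z


/-- if some candidate FTCG contains a collider-free backdoor path from an
intervention to `Y_t` remaining in `NC ∪ {that intervention}`, then the effect is not
identifiable by common adjustment. -/
theorem stmt18 {V : Type} [Fintype V] (Gs : V → V → Prop) (hGs : IsSCG Gs)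
    (n : ℕ) (X : Fin n → V) (γ : Fin n → ℤ) (hγ : ∀ i, 0 ≤ γ i) (Y : V) (t : ℤ)
    (Xf : Set (FullVert V)) (hXf : Xf = Set.range fun i => (X i, t - γ i))
    (i : Fin n) (G : FTCG V) (hG : Candidate Gs G)
    (vs : List (FullVert V))
    (hbd : IsColliderFreeBackdoor G.E (X i, t - γ i) (Y, t) vs)
    (hin : ∀ v ∈ vs, v ∈ NCset Gs Xf (Y, t) ∪ {(X i, t - γ i)}) :
    ¬ IdentifiableByCommonAdjustment Gs Xf (Y, t) := by
  rintro ⟨Z, hZsub, hCA⟩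
  set x : FullVert V := (X i, t - γ i) with hx
  have hxXf : x ∈ Xf := by rw [hXf]; exact ⟨i, rfl⟩
  obtain ⟨⟨hne, hnd, hch⟩, hhead, hlast, ⟨a1, ha1, hE1⟩, hnocol⟩ := hbd
  have hget0 : vs[0]? = some x := by
    cases vs with
    | nil => simp at hhead
    | cons a l => simpa using hhead
  -- vs has at least two elements
  obtain ⟨v0, v1, rest, rfl⟩ : ∃ v0 v1 rest, vs = v0 :: v1 :: rest := by
    match vs, ha1 with
    | v0 :: v1 :: rest, _ => exact ⟨v0, v1, rest, rfl⟩
    | [_], h => simp at h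
  have hv0 : v0 = x := by simpa using hget0
  have hv1 : v1 = a1 := by simpa using ha1
  subst hv0
  rw [← hv1] at hE1
  set vs := x :: v1 :: rest with hvs
  -- the path is proper
  have hproper : ProperPathFromTo G.E Xf {(Y, t)} vs := by
    refine ⟨⟨hne, hnd, hch⟩, ⟨x, hxXf, hhead⟩, ⟨(Y, t), rfl, hlast⟩, ?_⟩
    intro j b hjb hbXf
    have hbvs : b ∈ vs := List.mem_of_getElem? hjb
    have hbx : b = x := by
      rcases hin b hbvs with h | h
      · exact absurd hbXf h.2
      · exact h
    subst hbx
    have hlen : j < vs.length := (List.getElem?_eq_some_iff.mp hjb).1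
    exact (List.getElem?_inj hlen hnd).mp (hjb.trans hget0.symm)
  -- the path is non-causal
  have hnoncausal : ¬ vs.Chain' G.E := by
    intro hc
    have hE01 : G.E x v1 := (List.isChain_cons_cons.mp hc).1
    exact G.acyclic x (Relation.TransGen.head hE01 (Relation.TransGen.single hE1))
  obtain ⟨hForb, hblock⟩ := hCA G hG
  rcases hblock vs hproper hnoncausal with ⟨j, a, hja, _, haZ⟩ | ⟨j, a, _, hcol, _⟩
  · -- the blocking vertex is in NC ⊆ CF, contradicting Forb-disjointness somewhere
    have havs : a ∈ vs := List.mem_of_getElem? hja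
    have haXf : a ∉ Xf ∪ {(Y, t)} := (hZsub haZ).2
    have haNC : a ∈ NCset Gs Xf (Y, t) := by
      rcases hin a havs with h | h
      · exact h
      · exact absurd (Or.inl (h ▸ hxXf)) haXf
    obtain ⟨G', hG', haForb⟩ := haNC.1
    obtain ⟨hForb', _⟩ := hCA G' hG'
    exact absurd hForb' (by
      intro hempty
      exact Set.eq_empty_iff_forall_notMem.mp hempty a ⟨haZ, haForb⟩)
  · exact hnocol j hcol
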